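/- Let A be a compact Hausdorff totally disconnected topological space. Then for all clopen subsets K, L ⊆ A the set [K, L] = {f : C(A, A) | f '' K ⊆ L} is a clopen subset of C(A, A) in the compact-open topology, and consequently the space C(A, A) is totally separated. -/

import Mathlib

/-- For a Stone space `A`, the sets `[K, L] = {f | f '' K ⊆ L}` with `K`, `L` clopen are
clopen in `C(A, A)` with the compact-open topology, and `C(A, A)` is totally separated. -/
theorem isClopen_compactOpen_and_totallySeparated {A : Type*} [TopologicalSpace A]
    [CompactSpace A] [T2Space A] [TotallyDisconnectedSpace A] :
    (∀ K L : Set A, IsClopen K → IsClopen L →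
        IsClopen {f : C(A, A) | ⇑f '' K ⊆ L}) ∧
      TotallySeparatedSpace C(A, A) := by
  constructor
  · intro K L hK hL
    have : {f : C(A, A) | ⇑f '' K ⊆ L} = {f : C(A, A) | Set.MapsTo f K L} := by
      ext f; simp [Set.mapsTo_iff_image_subset]
    rw [this]
    exact ContinuousMap.isClopen_setOf_mapsTo hK.isClosed.isCompact hL
  · have : TotallySeparatedSpace A := loc_compact_t2_tot_disc_iff_tot_sep.mp ‹_›
    rw [totallySeparatedSpace_iff_exists_isClopen]
    intro f g hfg
    obtain ⟨x, hx⟩ : ∃ x, f x ≠ g x := by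
      by_contra h
      push_neg at h
      exact hfg (ContinuousMap.ext h)
    obtain ⟨U, hU, hfx, hgx⟩ := exists_isClopen_of_totally_separated hx
    refine ⟨{h : C(A, A) | Set.MapsTo h {x} U},
      ContinuousMap.isClopen_setOf_mapsTo isCompact_singleton hU, ?_, ?_⟩
    · simpa [Set.mapsTo_singleton] using hfx
    · simpa [Set.mapsTo_singleton] using hgx
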